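/- Let A be a nonnegative primitive tensor of order m and dimension n ≥ 2. Then the primitive degree satisfies γ(A) ≤ (n−1)² + 1, i.e., M(A^{(n−1)²+1}) is entrywise positive. -/
import Mathlib


open Finset

/- An order-`m` dimension-`n` nonnegative tensor is encoded as
`A : Fin n → (Fin (m-1) → Fin n) → ℝ`, with `A i t = a_{i t₁ ⋯ t_{m-1}}`. -/

/-- The majorization matrix `M(A)_{ij} = a_{ij⋯j}`. -/
def maj (n m : ℕ) (A : Fin n → (Fin (m-1) → Fin n) → ℝ) :
    Matrix (Fin n) (Fin n) ℝ :=
  fun i j => A i (fun _ => j)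

/-- The majorization matrices of the Shao-product powers of `A`:
`majPow n m A k = M(A^k)`, via the recursion
`M(A^{k+1})_{uj} = Σ_{j₂,…,j_m} a_{u j₂ ⋯ j_m} M(A^k)_{j₂ j} ⋯ M(A^k)_{j_m j}`
(with `M(A^0)` the identity, so that `majPow n m A 1 = maj n m A`). -/
def majPow (n m : ℕ) (A : Fin n → (Fin (m-1) → Fin n) → ℝ) :
    ℕ → Matrix (Fin n) (Fin n) ℝ
  | 0 => 1
  | k + 1 => fun u j =>
      ∑ t : Fin (m-1) → Fin n, A u t * ∏ i, majPow n m A k (t i) j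

/-- `A` is primitive: `M(A^r) > 0` entrywise for some positive `r`. -/
def Primitive (n m : ℕ) (A : Fin n → (Fin (m-1) → Fin n) → ℝ) : Prop :=
  ∃ r, 0 < r ∧ ∀ u j, 0 < majPow n m A r u j

section Aux

variable {n m : ℕ} {A : Fin n → (Fin (m-1) → Fin n) → ℝ}

lemma majPow_succ (k : ℕ) (u j : Fin n) :
    majPow n m A (k+1) u j
      = ∑ t : Fin (m-1) → Fin n, A u t * ∏ i, majPow n m A k (t i) j := rfl

lemma majPow_nonneg (hA : ∀ u t, 0 ≤ A u t) : ∀ (k : ℕ) (u j : Fin n),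
    0 ≤ majPow n m A k u j := by
  intro k
  induction k with
  | zero =>
      intro u j
      show (0:ℝ) ≤ (1 : Matrix (Fin n) (Fin n) ℝ) u j
      rw [Matrix.one_apply]
      split <;> norm_num
  | succ k ih =>
      intro u j
      rw [majPow_succ]
      exact Finset.sum_nonneg fun t _ =>
        mul_nonneg (hA u t) (Finset.prod_nonneg fun i _ => ih _ _)

lemma pos_zero_iff {u j : Fin n} : 0 < majPow n m A 0 u j ↔ u = j := by
  show 0 < (1 : Matrix (Fin n) (Fin n) ℝ) u j ↔ u = j
  rw [Matrix.one_apply]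
  by_cases h : u = j <;> simp [h]

lemma pos_succ_iff (hA : ∀ u t, 0 ≤ A u t) {k : ℕ} {u j : Fin n} :
    0 < majPow n m A (k+1) u j
      ↔ ∃ t, 0 < A u t ∧ ∀ i, 0 < majPow n m A k (t i) j := by
  constructor
  · intro h
    by_contra hc
    push_neg at hc
    have hz : ∑ t : Fin (m-1) → Fin n, A u t * ∏ i, majPow n m A k (t i) j = 0 := by
      apply Finset.sum_eq_zero
      intro t _
      rcases (hA u t).lt_or_eq with hpos' | heq
      · obtain ⟨i, hi⟩ := hc t hpos'
        have hzero : majPow n m A k (t i) j = 0 :=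
          le_antisymm hi (majPow_nonneg hA _ _ _)
        have hp0 : ∏ i', majPow n m A k (t i') j = 0 :=
          Finset.prod_eq_zero (Finset.mem_univ i) hzero
        rw [hp0, mul_zero]
      · rw [← heq, zero_mul]
    rw [majPow_succ, hz] at h
    exact lt_irrefl 0 h
  · rintro ⟨t, ht, hall⟩
    rw [majPow_succ]
    refine Finset.sum_pos' (fun t' _ => mul_nonneg (hA u t')
      (Finset.prod_nonneg fun i _ => majPow_nonneg hA _ _ _)) ?_
    exact ⟨t, Finset.mem_univ t, mul_pos ht (Finset.prod_pos fun i _ => hall i)⟩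

lemma pos_comp (hA : ∀ u t, 0 ≤ A u t) :
    ∀ (a b : ℕ) (u v j : Fin n), 0 < majPow n m A a u v →
      0 < majPow n m A b v j → 0 < majPow n m A (a+b) u j := by
  intro a
  induction a with
  | zero =>
      intro b u v j h1 h2
      rw [pos_zero_iff] at h1
      subst h1
      simpa using h2
  | succ a ih =>
      intro b u v j h1 h2
      rw [pos_succ_iff hA] at h1
      obtain ⟨t, ht, hall⟩ := h1
      have hall' : ∀ i, 0 < majPow n m A (a+b) (t i) j :=
        fun i => ih b _ _ _ (hall i) h2
      have h3 : (a+1)+b = (a+b)+1 := by omega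
      rw [h3]
      exact (pos_succ_iff hA).mpr ⟨t, ht, hall'⟩

lemma exists_pos_entry (hA : ∀ u t, 0 ≤ A u t) (hprim : Primitive n m A) :
    ∀ u : Fin n, ∃ t, 0 < A u t := by
  obtain ⟨r, hr, hpos⟩ := hprim
  intro u
  obtain ⟨r', rfl⟩ : ∃ r', r = r'+1 := ⟨r-1, by omega⟩
  obtain ⟨t, ht, -⟩ := (pos_succ_iff hA).mp (hpos u u)
  exact ⟨t, ht⟩

lemma pos_up (hA : ∀ u t, 0 ≤ A u t) (hprim : Primitive n m A) {j : Fin n}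
    {k K : ℕ} (hkK : k ≤ K) (h : ∀ u, 0 < majPow n m A k u j) :
    ∀ u, 0 < majPow n m A K u j := by
  obtain ⟨d, rfl⟩ : ∃ d, K = k + d := ⟨K - k, by omega⟩
  clear hkK
  induction d with
  | zero => simpa using h
  | succ d ih =>
      intro u
      obtain ⟨t, ht⟩ := exists_pos_entry hA hprim u
      exact (pos_succ_iff hA).mpr ⟨t, ht, fun i => ih (t i)⟩

lemma pos_one_exists (hA : ∀ u t, 0 ≤ A u t) (hm : 2 ≤ m)
    (hprim : Primitive n m A) :
    ∀ a : Fin n, ∃ w, 0 < majPow n m A 1 w a := by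
  obtain ⟨r, hr, hpos⟩ := hprim
  intro a
  have step : ∀ k, (∃ w, 0 < majPow n m A (k+1) w a) →
      ∃ w, 0 < majPow n m A k w a := by
    intro k ⟨w, hw⟩
    obtain ⟨t, -, hall⟩ := (pos_succ_iff hA).mp hw
    exact ⟨t ⟨0, by omega⟩, hall _⟩
  have key : ∀ d, d ≤ r - 1 → ∃ w, 0 < majPow n m A (r - d) w a := by
    intro d
    induction d with
    | zero =>
        intro _
        exact ⟨a, by simpa using hpos a a⟩
    | succ d ih =>
        intro hd
        have h1 : r - d = (r - (d+1)) + 1 := by omega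
        have h2 := ih (by omega)
        rw [h1] at h2
        exact step _ h2
  have := key (r-1) le_rfl
  have e : r - (r-1) = 1 := by omega
  rwa [e] at this

lemma pos_det (hA : ∀ u t, 0 ≤ A u t) {k k' : ℕ} {v v' : Fin n}
    (h : ∀ u, (0 < majPow n m A k u v ↔ 0 < majPow n m A k' u v')) :
    ∀ (d : ℕ) (u), (0 < majPow n m A (k+d) u v ↔ 0 < majPow n m A (k'+d) u v') := by
  intro d
  induction d with
  | zero => simpa using h
  | succ d ih =>
      intro u
      rw [show k+(d+1) = (k+d)+1 from rfl, show k'+(d+1) = (k'+d)+1 from rfl,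
        pos_succ_iff hA, pos_succ_iff hA]
      constructor
      · rintro ⟨t, ht, hall⟩
        exact ⟨t, ht, fun i => (ih (t i)).mp (hall i)⟩
      · rintro ⟨t, ht, hall⟩
        exact ⟨t, ht, fun i => (ih (t i)).mpr (hall i)⟩

lemma grow (hA : ∀ u t, 0 ≤ A u t) (hprim : Primitive n m A) (hn : 2 ≤ n)
    {v : Fin n} {p : ℕ} (hp1 : 1 ≤ p) (hp : 0 < majPow n m A p v v) :
    ∀ u, 0 < majPow n m A ((n-1)*p) u v := by
  classical
  obtain ⟨r, hr0, hr⟩ := hprim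
  have claim : ∀ t : ℕ, (∀ u, 0 < majPow n m A (t*p) u v) ∨
      t + 1 ≤ (univ.filter (fun u => 0 < majPow n m A (t*p) u v)).card := by
    intro t
    induction t with
    | zero =>
        right
        have hv : v ∈ univ.filter (fun u => 0 < majPow n m A (0*p) u v) := by
          refine mem_filter.mpr ⟨mem_univ v, ?_⟩
          rw [Nat.zero_mul]
          exact pos_zero_iff.mpr rfl
        have := Finset.card_pos.mpr ⟨v, hv⟩
        omega
    | succ t ih =>
        have hmle : t*p ≤ (t+1)*p := Nat.mul_le_mul_right p (by omega)
        rcases ih with h | h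
        · left
          exact pos_up hA ⟨r, hr0, hr⟩ hmle h
        · by_cases hu : ∀ u, 0 < majPow n m A (t*p) u v
          · left
            exact pos_up hA ⟨r, hr0, hr⟩ hmle hu
          · have hsub : (univ.filter (fun u => 0 < majPow n m A (t*p) u v)) ⊆
                (univ.filter (fun u => 0 < majPow n m A ((t+1)*p) u v)) := by
              intro u' hu'
              have h1 := (mem_filter.mp hu').2
              refine mem_filter.mpr ⟨mem_univ _, ?_⟩
              have := pos_comp hA (t*p) p u' v v h1 hp
              rwa [show (t+1)*p = t*p + p from by ring]
            by_cases hss : (univ.filter (fun u => 0 < majPow n m A ((t+1)*p) u v)) ⊆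
                (univ.filter (fun u => 0 < majPow n m A (t*p) u v))
            · exfalso
              have hiff : ∀ u, (0 < majPow n m A (t*p) u v ↔
                  0 < majPow n m A ((t+1)*p) u v) := by
                intro u
                constructor
                · intro h1
                  exact (mem_filter.mp (hsub (mem_filter.mpr ⟨mem_univ _, h1⟩))).2
                · intro h1
                  exact (mem_filter.mp (hss (mem_filter.mpr ⟨mem_univ _, h1⟩))).2
              have hper : ∀ (a : ℕ) (u), (0 < majPow n m A (t*p + a*p) u v ↔
                  0 < majPow n m A (t*p) u v) := by
                intro a
                induction a with
                | zero => intro u; simp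
                | succ a iha =>
                    intro u
                    have X := pos_det hA hiff (a*p) u
                    rw [show t*p + (a+1)*p = (t+1)*p + a*p from by ring]
                    exact (X.symm).trans (iha u)
              have hrle : r ≤ t*p + r*p := by
                have : r ≤ r*p := Nat.le_mul_of_pos_right r (by omega)
                omega
              have hru : ∀ u, 0 < majPow n m A (t*p + r*p) u v :=
                pos_up hA ⟨r, hr0, hr⟩ hrle (fun u => hr u v)
              exact hu (fun u => (hper r u).mp (hru u))
            · right
              have hlt : (univ.filter (fun u => 0 < majPow n m A (t*p) u v)) ⊂
                  (univ.filter (fun u => 0 < majPow n m A ((t+1)*p) u v)) :=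
                Finset.ssubset_def.mpr ⟨hsub, hss⟩
              have := Finset.card_lt_card hlt
              omega
  rcases claim (n-1) with h | h
  · exact h
  · have hcard : (univ.filter (fun u => 0 < majPow n m A ((n-1)*p) u v)).card
        = Fintype.card (Fin n) := by
      have h1 := Finset.card_filter_le (univ : Finset (Fin n))
        (fun u => 0 < majPow n m A ((n-1)*p) u v)
      rw [Fintype.card_fin]
      have h2 : (univ : Finset (Fin n)).card = n := by
        simp
      omega
    have huniv := Finset.eq_univ_of_card _ hcard
    intro u
    have : u ∈ univ.filter (fun u => 0 < majPow n m A ((n-1)*p) u v) := by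
      rw [huniv]; exact mem_univ u
    exact (mem_filter.mp this).2

lemma arith1 {n i p : ℕ} (hn : 2 ≤ n) (hip : i + p ≤ n) (hp : p ≤ n - 1) :
    i + (n-1)*p ≤ (n-1)^2 + 1 := by
  obtain ⟨n2, rfl⟩ : ∃ n2, n = n2 + 2 := ⟨n - 2, by omega⟩
  have hp' : p ≤ n2 + 1 := by omega
  have h1 : n2 * p ≤ n2 * (n2+1) := mul_le_mul_right hp' n2
  show i + (n2+1)*p ≤ (n2+1)^2 + 1
  calc i + (n2+1)*p = (i + p) + n2*p := by ring
    _ ≤ (n2+2) + n2*(n2+1) := add_le_add hip h1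
    _ = (n2+1)^2 + 1 := by ring

lemma arith3 {n dd : ℕ} (hn : 2 ≤ n) (h1 : 1 ≤ dd) (h2 : dd ≤ n - 1) :
    dd + (n-1)*(n - dd) ≤ (n-1)^2 + 1 := by
  obtain ⟨n2, rfl⟩ : ∃ n2, n = n2 + 2 := ⟨n - 2, by omega⟩
  obtain ⟨d2, rfl⟩ : ∃ d2, dd = d2 + 1 := ⟨dd - 1, by omega⟩
  have hd : d2 ≤ n2 := by omega
  obtain ⟨e, rfl⟩ : ∃ e, n2 = d2 + e := ⟨n2 - d2, by omega⟩
  have e1 : (d2 + e + 2) - 1 = d2 + e + 1 := by omega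
  have e2 : (d2 + e + 2) - (d2 + 1) = e + 1 := by omega
  show d2 + 1 + (d2 + e + 2 - 1) * (d2 + e + 2 - (d2+1)) ≤ (d2 + e + 2 - 1)^2 + 1
  rw [e1, e2]
  have h3 : (d2+e+1)*(e+1) + (d2+e+1)*d2 = (d2+e+1)^2 := by ring
  have h4 : d2 ≤ (d2+e+1)*d2 := Nat.le_mul_of_pos_left _ (by omega)
  linarith

end Aux

/-- the primitive degree of a primitive tensor satisfies
`γ(A) ≤ (n-1)² + 1`, i.e. `M(A^{(n-1)²+1})` is entrywise positive. -/
theorem stmt_18 (n m : ℕ) (hm : 2 ≤ m) (hn : 2 ≤ n)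
    (A : Fin n → (Fin (m-1) → Fin n) → ℝ) (hA : ∀ u t, 0 ≤ A u t)
    (hprim : Primitive n m A) :
    sInf {r : ℕ | 0 < r ∧ ∀ u j : Fin n, 0 < majPow n m A r u j}
        ≤ (n - 1) ^ 2 + 1 ∧
      ∀ u j : Fin n, 0 < majPow n m A ((n - 1) ^ 2 + 1) u j := by
  classical
  have key : ∀ j w : Fin n, 0 < majPow n m A ((n-1)^2+1) w j := by
    intro j
    obtain ⟨r, hr0, hr⟩ := id hprim
    choose next hnext using pos_one_exists hA hm hprim
    set f : ℕ → Fin n := fun t => next^[t] j with hf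
    have hstep : ∀ t, 0 < majPow n m A 1 (f (t+1)) (f t) := by
      intro t
      have he : f (t+1) = next (f t) := Function.iterate_succ_apply' next t j
      rw [he]
      exact hnext (f t)
    have hthread : ∀ a d, 0 < majPow n m A d (f (a+d)) (f a) := by
      intro a d
      induction d with
      | zero => simpa using pos_zero_iff.mpr rfl
      | succ d ih =>
          have h1 := hstep (a+d)
          have h2 := pos_comp hA 1 d (f (a+d+1)) (f (a+d)) (f a) h1 ih
          rw [show 1+d = d+1 from by omega] at h2
          exact h2
    have hfin : ∀ (v : Fin n) (i p : ℕ), 1 ≤ p → 0 < majPow n m A i v j →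
        0 < majPow n m A p v v → i + (n-1)*p ≤ (n-1)^2+1 →
        ∀ w, 0 < majPow n m A ((n-1)^2+1) w j := by
      intro v i p hp1 hvj hvv hval
      have hg := grow hA ⟨r, hr0, hr⟩ hn hp1 hvv
      have hall : ∀ w, 0 < majPow n m A ((n-1)*p + i) w j :=
        fun w => pos_comp hA ((n-1)*p) i w v j (hg w) hvj
      exact pos_up hA ⟨r, hr0, hr⟩ (by linarith) hall
    have hpig : ∃ a b : Fin (n+1), a ≠ b ∧ f a.val = f b.val := by
      apply Fintype.exists_ne_map_eq_of_card_lt (fun a : Fin (n+1) => f a.val)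
      simpa using Nat.lt_succ_self n
    obtain ⟨a, b, hab, hfab⟩ := hpig
    have hPex : ∃ k, k ≤ n ∧ ∃ i, i < k ∧ f i = f k := by
      rcases Nat.lt_or_ge a.val b.val with h1 | h1
      · exact ⟨b.val, by have := b.isLt; omega, a.val, h1, hfab⟩
      · have hne : a.val ≠ b.val := fun h => hab (Fin.ext h)
        exact ⟨a.val, by have := a.isLt; omega, b.val, by omega, hfab.symm⟩
    set k₀ := Nat.find hPex with hk₀def
    obtain ⟨hk₀n, i₀, hi₀lt, hui⟩ := Nat.find_spec hPex
    rw [← hk₀def] at hk₀n hi₀lt hui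
    have hinj : ∀ i k, i < k → k < k₀ → f i ≠ f k := by
      intro i k hik hk hf'
      exact Nat.find_min hPex hk ⟨by omega, i, hik, hf'⟩
    by_cases hgood : i₀ + (n-1)*(k₀ - i₀) ≤ (n-1)^2+1
    · have hiv : 0 < majPow n m A i₀ (f i₀) j := by
        have := hthread 0 i₀
        rwa [Nat.zero_add] at this
      have hret : 0 < majPow n m A (k₀ - i₀) (f i₀) (f i₀) := by
        have := hthread i₀ (k₀ - i₀)
        rw [show i₀ + (k₀ - i₀) = k₀ from by omega] at this
        rwa [← hui] at this
      exact hfin (f i₀) i₀ (k₀ - i₀) (by omega) hiv hret hgood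
    · have hk0 : k₀ = n ∧ i₀ = 0 := by
        by_contra hcon
        have hple : k₀ - i₀ ≤ n - 1 := by omega
        exact hgood (arith1 hn (by omega) hple)
      obtain ⟨hk0n, hi00⟩ := hk0
      have hu_n : f n = j := by
        rw [hi00, hk0n] at hui
        exact hui.symm
      have hperiod : ∀ a', f (a' + n) = f a' := by
        intro a'
        show next^[a' + n] j = next^[a'] j
        have hn' : next^[n] j = j := hu_n
        rw [Function.iterate_add_apply, hn']
      have hper2 : ∀ q a', f (a' + n*q) = f a' := by
        intro q
        induction q with
        | zero => intro a'; simp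
        | succ q ih =>
            intro a'
            rw [show a' + n*(q+1) = (a' + n*q) + n from by ring, hperiod, ih]
      have hmod : ∀ c, f c = f (c % n) := by
        intro c
        conv_lhs => rw [← Nat.mod_add_div c n]
        exact hper2 _ _
      by_cases hbr : ∃ c, c ≤ n - 1 ∧ ∃ x, 0 < majPow n m A 1 x (f c) ∧ x ≠ f (c+1)
      · obtain ⟨c, hc, x, hx, hxne⟩ := hbr
        have hinjU : Function.Injective (fun d : Fin n => f d.val) := by
          intro d e hde
          by_contra hne'
          have hv : d.val ≠ e.val := fun h => hne' (Fin.ext h)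
          rcases Nat.lt_or_ge d.val e.val with h1 | h1
          · exact hinj d.val e.val h1 (by have := e.isLt; omega) hde
          · exact hinj e.val d.val (by omega) (by have := d.isLt; omega) hde.symm
        obtain ⟨d, hd⟩ := Finite.injective_iff_surjective.mp hinjU x
        have hd' : f d.val = x := hd
        have hddlt : d.val < n := d.isLt
        rw [← hd'] at hx hxne
        by_cases hcase : d.val ≤ c
        · have hiv : 0 < majPow n m A d.val (f d.val) j := by
            have := hthread 0 d.val
            rwa [Nat.zero_add] at this
          have hth : 0 < majPow n m A (c - d.val) (f c) (f d.val) := by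
            have := hthread d.val (c - d.val)
            rwa [show d.val + (c - d.val) = c from by omega] at this
          have hret : 0 < majPow n m A (1 + (c - d.val)) (f d.val) (f d.val) :=
            pos_comp hA 1 (c - d.val) (f d.val) (f c) (f d.val) hx hth
          by_cases hcc : c = n - 1
          · have hdd1 : 1 ≤ d.val := by
              by_contra hdd0
              have hz : d.val = 0 := by omega
              apply hxne
              rw [hz]
              rw [show c + 1 = n from by omega]
              show f 0 = f n
              rw [hu_n]
              exact rfl
            have e3 : 1 + (c - d.val) = n - d.val := by omega
            rw [e3] at hret
            exact hfin (f d.val) d.val (n - d.val) (by omega) hiv hret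
              (arith3 hn hdd1 (by omega))
          · exact hfin (f d.val) d.val (1 + (c - d.val)) (by omega) hiv hret
              (arith1 hn (by omega) (by omega))
        · have hdd2 : c + 2 ≤ d.val := by
            rcases Nat.lt_or_ge (c+1) d.val with h1 | h1
            · omega
            · exfalso
              apply hxne
              congr 1
              omega
          have h1 : 0 < majPow n m A 1 j (f (n-1)) := by
            have := hstep (n-1)
            rwa [show n-1+1 = n from by omega, hu_n] at this
          have h2 : 0 < majPow n m A (n-1-d.val) (f (n-1)) (f d.val) := by
            have := hthread d.val (n-1-d.val)
            rwa [show d.val + (n-1-d.val) = n-1 from by omega] at this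
          have h4 : 0 < majPow n m A c (f c) j := by
            have := hthread 0 c
            rwa [Nat.zero_add] at this
          have cc1 := pos_comp hA 1 (n-1-d.val) j (f (n-1)) (f d.val) h1 h2
          have cc2 := pos_comp hA (1+(n-1-d.val)) 1 j (f d.val) (f c) cc1 hx
          have cc3 := pos_comp hA (1+(n-1-d.val)+1) c j (f c) j cc2 h4
          refine hfin j 0 (1+(n-1-d.val)+1+c) (by omega) (pos_zero_iff.mpr rfl) cc3 ?_
          have hple : 1+(n-1-d.val)+1+c ≤ n - 1 := by omega
          calc 0 + (n-1)*(1+(n-1-d.val)+1+c) = (n-1)*(1+(n-1-d.val)+1+c) := by ring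
            _ ≤ (n-1)*(n-1) := mul_le_mul_right hple _
            _ ≤ (n-1)^2 + 1 := by
                rw [show (n-1)^2 = (n-1)*(n-1) from by ring]
                exact Nat.le_succ _
      · exfalso
        push_neg at hbr
        have hone : 1 % n = 1 := Nat.mod_eq_of_lt (by omega)
        have hstep1 : ∀ c x, 0 < majPow n m A 1 x (f c) → x = f (c+1) := by
          intro c x hx1
          rw [hmod c] at hx1
          have hcn : c % n < n := Nat.mod_lt c (by omega)
          have h2 := hbr (c % n) (by omega) x hx1
          rw [h2]
          by_cases hlt : c % n + 1 < n
          · have hm1 : (c+1) % n = c % n + 1 := by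
              rw [Nat.add_mod, hone]
              exact Nat.mod_eq_of_lt hlt
            rw [hmod (c+1), hm1]
          · have heq : c % n + 1 = n := by omega
            have hm0 : (c+1) % n = 0 := by
              rw [Nat.add_mod, hone, heq, Nat.mod_self]
            rw [heq, hmod (c+1), hm0]
            exact hu_n
        have hclaim : ∀ k w, 0 < majPow n m A k w j → w = f k := by
          intro k
          induction k with
          | zero =>
              intro w hw
              exact pos_zero_iff.mp hw
          | succ k ih =>
              intro w hw
              obtain ⟨t, ht, hall⟩ := (pos_succ_iff hA).mp hw
              have h1 : 0 < majPow n m A 1 w (f k) :=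
                (pos_succ_iff hA).mpr
                  ⟨t, ht, fun i => pos_zero_iff.mpr (ih _ (hall i))⟩
              exact hstep1 k w h1
        have c0 : (⟨0, by omega⟩ : Fin n) = f r := hclaim r _ (hr _ j)
        have c1 : (⟨1, by omega⟩ : Fin n) = f r := hclaim r _ (hr _ j)
        have hcontra := c0.trans c1.symm
        simp at hcontra
  constructor
  · exact Nat.sInf_le ⟨Nat.succ_pos _, fun u j => key j u⟩
  · exact fun u j => key j u
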